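/- A finitely generated group of unipotent matrices over a field of characteristic p > 0, all of whose elements are unipotent, is finite. -/

import Mathlib

open Module LinearMap Submodule

namespace UnipotentFG

variable {K : Type*} [Field K] {V : Type*} [AddCommGroup V] [Module K V]

/-- Evaluation at a vector, as a linear map. -/
def evalAt (v : V) : Module.End K V →ₗ[K] V where
  toFun f := f v
  map_add' _ _ := rfl
  map_smul' _ _ := rfl

@[simp] lemma evalAt_apply (v : V) (f : Module.End K V) : evalAt v f = f v := rfl

theorem burnside [IsAlgClosed K] [FiniteDimensional K V] [Nontrivial V]
    (S : Set (Module.End K V)) (h1 : 1 ∈ S)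
    (hmul : ∀ f ∈ S, ∀ g ∈ S, f * g ∈ S)
    (hirr : ∀ W : Submodule K V, (∀ f ∈ S, ∀ x ∈ W, f x ∈ W) → W = ⊥ ∨ W = ⊤) :
    Submodule.span K S = ⊤ := by
  set A := Submodule.span K S with hA
  have hSA : S ⊆ (A : Set _) := Submodule.subset_span
  have hAmul : ∀ a ∈ A, ∀ b ∈ A, a * b ∈ A := by
    intro a ha b hb
    have hle : A * A ≤ A := by
      rw [hA, Submodule.span_mul_span]
      refine Submodule.span_le.2 ?_
      rintro x ⟨f, hf, g, hg, rfl⟩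
      exact hSA (hmul f hf g hg)
    exact hle (Submodule.mul_mem_mul ha hb)
  have hA1 : (1 : Module.End K V) ∈ A := hSA h1
  -- orbit lemma
  have horbit : ∀ v : V, v ≠ 0 → ∀ w : V, ∃ a ∈ A, a v = w := by
    intro v hv w
    have hWinv : ∀ f ∈ S, ∀ x ∈ A.map (evalAt (K := K) v), f x ∈ A.map (evalAt (K := K) v) := by
      rintro f hf x hx
      rcases Submodule.mem_map.1 hx with ⟨a, ha, rfl⟩
      exact Submodule.mem_map.2 ⟨f * a, hAmul f (hSA hf) a ha, rfl⟩
    rcases hirr _ hWinv with hbot | htop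
    · exfalso
      have hvmem : v ∈ A.map (evalAt (K := K) v) :=
        Submodule.mem_map.2 ⟨1, hA1, rfl⟩
      rw [hbot] at hvmem
      exact hv (Submodule.mem_bot _ |>.1 hvmem)
    · have hwmem : w ∈ A.map (evalAt (K := K) v) := htop ▸ Submodule.mem_top
      rcases Submodule.mem_map.1 hwmem with ⟨a, ha, rfl⟩
      exact ⟨a, ha, rfl⟩
  obtain ⟨v₀, hv₀⟩ := exists_ne (0 : V)
  have hone : (1 : Module.End K V) ≠ 0 := by
    intro h
    exact hv₀ (by simpa using congrArg (fun f : Module.End K V => f v₀) h)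
  set ranks : Set ℕ := {r | ∃ a ∈ A, a ≠ 0 ∧ finrank K (LinearMap.range a) = r} with hranks
  have hrne : ranks.Nonempty := ⟨_, 1, hA1, hone, rfl⟩
  obtain ⟨a, haA, ha0, har⟩ := Nat.sInf_mem hrne
  have hmin : ∀ b ∈ A, b ≠ 0 → sInf ranks ≤ finrank K (LinearMap.range b) :=
    fun b hb hb0 => Nat.sInf_le ⟨b, hb, hb0, rfl⟩
  have hrpos : 0 < finrank K (LinearMap.range a) := by
    rw [finrank_pos_iff]
    rcases DFunLike.ne_iff.1 ha0 with ⟨u, hu⟩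
    exact ⟨⟨⟨a u, LinearMap.mem_range_self a u⟩, 0, by simpa [Subtype.ext_iff] using hu⟩⟩
  -- minimal rank is 1
  have hrank1 : finrank K (LinearMap.range a) = 1 := by
    rcases lt_or_ge (finrank K (LinearMap.range a)) 2 with h2 | h2
    · omega
    exfalso
    rcases DFunLike.ne_iff.1 ha0 with ⟨u, hu⟩
    have hspan_lt : span K {a u} < LinearMap.range a := by
      refine lt_of_le_of_ne ?_ ?_
      · rw [Submodule.span_singleton_le_iff_mem]; exact LinearMap.mem_range_self a u
      · intro h
        rw [← h, finrank_span_singleton (by simpa using hu)] at h2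
        omega
    obtain ⟨y, hyr, hyn⟩ := SetLike.exists_of_lt hspan_lt
    obtain ⟨v₁, rfl⟩ := hyr
    obtain ⟨b, hbA, hb⟩ := horbit (a u) (by simpa using hu) v₁
    have hWinv : ∀ x ∈ LinearMap.range a, (a * b) x ∈ LinearMap.range a :=
      fun x _ => LinearMap.mem_range_self _ _
    set g : Module.End K (LinearMap.range a) := (a * b : Module.End K V).restrict hWinv with hg
    haveI : Nontrivial (LinearMap.range a) :=
      ⟨⟨⟨a u, LinearMap.mem_range_self a u⟩, 0, by simpa [Subtype.ext_iff] using hu⟩⟩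
    obtain ⟨μ, hμ⟩ := Module.End.exists_eigenvalue g
    obtain ⟨w, hw⟩ := hμ.exists_hasEigenvector
    set c : Module.End K V := a * b * a - μ • a with hc
    have hcA : c ∈ A :=
      Submodule.sub_mem _ (hAmul _ (hAmul a haA b hbA) a haA) (Submodule.smul_mem _ _ haA)
    have hcu : c u = a v₁ - μ • a u := by
      simp [hc, Module.End.mul_apply, hb]
    have hc0 : c ≠ 0 := by
      intro h
      apply hyn
      have h0 : a v₁ - μ • a u = 0 := by rw [← hcu, h]; rfl
      rw [sub_eq_zero] at h0
      rw [h0]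
      exact Submodule.smul_mem _ _ (Submodule.mem_span_singleton_self _)
    have hkerw : (a * b - μ • (1 : Module.End K V)) (w : V) = 0 := by
      have h1 : ((a * b : Module.End K V).restrict hWinv) w = μ • w := hw.apply_eq_smul
      have h2 := congrArg (Subtype.val) h1
      rw [LinearMap.restrict_apply] at h2
      simpa [sub_eq_zero] using h2
    have hrangec : LinearMap.range c ≤
        (LinearMap.range a).map (a * b - μ • (1 : Module.End K V)) := by
      rintro x ⟨t, rfl⟩
      refine Submodule.mem_map.2 ⟨a t, LinearMap.mem_range_self _ _, ?_⟩
      simp [hc, Module.End.mul_apply]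
    have hlt : finrank K ((LinearMap.range a).map (a * b - μ • (1 : Module.End K V)))
        < finrank K (LinearMap.range a) := by
      set f := (a * b - μ • (1 : Module.End K V)) with hf
      have e1 : LinearMap.range (f.domRestrict (LinearMap.range a))
          = (LinearMap.range a).map f := LinearMap.range_domRestrict _ _
      have e2 := LinearMap.finrank_range_add_finrank_ker (f.domRestrict (LinearMap.range a))
      have e3 : 0 < finrank K (LinearMap.ker (f.domRestrict (LinearMap.range a))) := by
        rw [finrank_pos_iff]
        refine ⟨⟨⟨w, ?_⟩, 0, ?_⟩⟩
        · rw [LinearMap.mem_ker, LinearMap.domRestrict_apply]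
          exact hkerw
        · simp [Subtype.ext_iff, hw.2]
      rw [e1] at e2
      omega
    have hge : sInf ranks ≤ finrank K (LinearMap.range c) := hmin c hcA hc0
    have hle2 : finrank K (LinearMap.range c)
        ≤ finrank K ((LinearMap.range a).map (a * b - μ • (1 : Module.End K V))) :=
      Submodule.finrank_mono hrangec
    omega
  -- a has rank one: a x = φ x • z
  rcases DFunLike.ne_iff.1 ha0 with ⟨u₀, hu₀⟩
  have hz0 : a u₀ ≠ 0 := by simpa using hu₀
  set z := a u₀ with hzdef
  have hzr : span K {z} = LinearMap.range a := by
    refine Submodule.eq_of_le_of_finrank_eq ?_ ?_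
    · rw [Submodule.span_singleton_le_iff_mem]; exact LinearMap.mem_range_self a u₀
    · rw [finrank_span_singleton hz0, hrank1]
  set e := LinearEquiv.toSpanNonzeroSingleton K V z hz0 with he
  have hacod : ∀ x : V, a x ∈ span K {z} := fun x => hzr ▸ LinearMap.mem_range_self a x
  set acod : V →ₗ[K] span K {z} := a.codRestrict (span K {z}) hacod with hacoddef
  set φ : V →ₗ[K] K := (e.symm : span K {z} →ₗ[K] K).comp acod with hφdef
  have hφ : ∀ x, a x = φ x • z := by
    intro x
    have h1 : e (φ x) = acod x := by
      simp only [hφdef, LinearMap.comp_apply, LinearEquiv.coe_coe]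
      exact e.apply_symm_apply _
    have h2 := congrArg (Subtype.val) h1
    rw [he, LinearEquiv.toSpanNonzeroSingleton_apply] at h2
    simpa [hacoddef] using h2.symm
  have hφ0 : φ u₀ ≠ 0 := by
    intro h
    apply hz0
    rw [hzdef, hφ u₀, h, zero_smul]
  -- the functionals φ ∘ c, c ∈ A, fill the dual
  set Φ : Submodule K (Module.Dual K V) := A.map (LinearMap.llcomp K V V K φ) with hΦdef
  have hΦinv : ∀ f ∈ S, ∀ x ∈ Φ.dualCoannihilator, f x ∈ Φ.dualCoannihilator := by
    intro f hf x hx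
    rw [Submodule.mem_dualCoannihilator] at hx ⊢
    intro ψ hψ
    rcases Submodule.mem_map.1 hψ with ⟨c, hcA, rfl⟩
    have : (LinearMap.llcomp K V V K φ) (c * f) ∈ Φ :=
      Submodule.mem_map.2 ⟨c * f, hAmul c hcA f (hSA hf), rfl⟩
    simpa [Module.End.mul_apply] using hx _ this
  have hΦco : Φ.dualCoannihilator = ⊥ := by
    rcases hirr Φ.dualCoannihilator hΦinv with h | h
    · exact h
    · exfalso
      have hu₀mem : u₀ ∈ Φ.dualCoannihilator := h ▸ Submodule.mem_top
      rw [Submodule.mem_dualCoannihilator] at hu₀mem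
      have : φ ∈ Φ := Submodule.mem_map.2 ⟨1, hA1, by ext x; simp⟩
      exact hφ0 (hu₀mem φ this)
  have hΦtop : Φ = ⊤ := by
    have h := Subspace.finrank_add_finrank_dualCoannihilator_eq Φ
    rw [hΦco, finrank_bot, add_zero] at h
    exact Submodule.eq_top_of_finrank_eq (by rw [h, Subspace.dual_finrank_eq])
  -- all rank ones are in A
  have hrk1 : ∀ (w : V) (ψ : Module.Dual K V), ψ.smulRight w ∈ A := by
    intro w ψ
    obtain ⟨b, hbA, hb⟩ := horbit z hz0 w
    have hψΦ : ψ ∈ Φ := hΦtop ▸ Submodule.mem_top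
    rcases Submodule.mem_map.1 hψΦ with ⟨c, hcA, hc⟩
    have heq : b * a * c = ψ.smulRight w := by
      ext x
      have hcx : ψ x = φ (c x) := by rw [← hc]; rfl
      simp [Module.End.mul_apply, hφ (c x), map_smul, hb, hcx]
    rw [← heq]
    exact hAmul _ (hAmul b hbA a haA) c hcA
  -- conclude
  rw [Submodule.eq_top_iff']
  intro f
  set bV := Module.finBasis K V with hbV
  have hf : f = ∑ i, (bV.coord i).smulRight (f (bV i)) := by
    refine bV.ext fun j => ?_
    simp only [LinearMap.coe_sum, Finset.sum_apply, LinearMap.smulRight_apply,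
      Basis.coord_apply, Basis.repr_self]
    rw [Finset.sum_eq_single j]
    · simp
    · intro i _ hij
      simp [Finsupp.single_apply, Ne.symm hij]
    · intro h; exact absurd (Finset.mem_univ j) h
  rw [hf]
  exact Submodule.sum_mem _ fun i _ => hrk1 _ _

theorem trace_nondeg [FiniteDimensional K V] (g : Module.End K V)
    (h : ∀ x : Module.End K V, LinearMap.trace K V (g * x) = 0) : g = 0 := by
  classical
  set b := Module.finBasis K V with hb
  set M := LinearMap.toMatrixAlgEquiv b g with hM
  have hMN : ∀ N : Matrix (Fin (finrank K V)) (Fin (finrank K V)) K, (M * N).trace = 0 := by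
    intro N
    have h1 := h ((LinearMap.toMatrixAlgEquiv b).symm N)
    rw [LinearMap.trace_eq_matrix_trace K b] at h1
    have h2 : LinearMap.toMatrix b b (g * (LinearMap.toMatrixAlgEquiv b).symm N)
        = M * N := by
      have : LinearMap.toMatrix b b (g * (LinearMap.toMatrixAlgEquiv b).symm N)
          = LinearMap.toMatrixAlgEquiv b (g * (LinearMap.toMatrixAlgEquiv b).symm N) := rfl
      rw [this, map_mul, (LinearMap.toMatrixAlgEquiv b).apply_symm_apply, hM]
    rwa [h2] at h1
  have hM0 : M = 0 := by
    ext i j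
    have h2 := hMN (Matrix.single j i 1)
    rw [Matrix.trace] at h2
    simp only [Matrix.diag_apply, Matrix.mul_apply, Matrix.single, Matrix.of_apply,
      mul_ite, mul_one, mul_zero, ite_and, Finset.sum_ite_eq, Finset.sum_ite_eq',
      Finset.mem_univ, if_true] at h2
    simpa using h2
  have : LinearMap.toMatrixAlgEquiv b g = LinearMap.toMatrixAlgEquiv b 0 := by
    rw [← hM, hM0, map_zero]
  exact (LinearMap.toMatrixAlgEquiv b).injective this

universe u

theorem kolchin_fixed {K : Type*} [Field K] [IsAlgClosed K] :
    ∀ (m : ℕ) (V : Type u) [AddCommGroup V] [Module K V] [FiniteDimensional K V],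
      finrank K V ≤ m → Nontrivial V → ∀ S : Set (Module.End K V), 1 ∈ S →
      (∀ f ∈ S, ∀ g ∈ S, f * g ∈ S) → (∀ f ∈ S, IsNilpotent (f - 1)) →
      ∃ v : V, v ≠ 0 ∧ ∀ f ∈ S, f v = v := by
  intro m
  induction m with
  | zero =>
    intro V _ _ _ hr hnt S _ _ _
    exfalso
    have := Module.finrank_pos (R := K) (M := V)
    omega
  | succ m IH =>
    intro V _ _ _ hr hnt S h1 hmul hnil
    by_cases hex : ∃ W : Submodule K V, W ≠ ⊥ ∧ W ≠ ⊤ ∧ ∀ f ∈ S, ∀ x ∈ W, f x ∈ W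
    · obtain ⟨W, hWbot, hWtop, hWinv⟩ := hex
      set S' : Set (Module.End K W) := {g | ∃ f ∈ S, ∀ x : W, (g x : V) = f x} with hS'
      have h1' : (1 : Module.End K W) ∈ S' := ⟨1, h1, fun x => rfl⟩
      have hmul' : ∀ g₁ ∈ S', ∀ g₂ ∈ S', g₁ * g₂ ∈ S' := by
        rintro g₁ ⟨f₁, hf₁, hg₁⟩ g₂ ⟨f₂, hf₂, hg₂⟩
        refine ⟨f₁ * f₂, hmul f₁ hf₁ f₂ hf₂, fun x => ?_⟩
        rw [Module.End.mul_apply, Module.End.mul_apply, hg₁, hg₂]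
      have hcoe : ∀ (g : Module.End K W) (f : Module.End K V), (∀ x : W, (g x : V) = f x) →
          ∀ (k : ℕ) (x : W), (((g - 1) ^ k) x : V) = ((f - 1) ^ k) (x : V) := by
        intro g f hgf k
        induction k with
        | zero => intro x; simp
        | succ k ih =>
          intro x
          rw [pow_succ, pow_succ, Module.End.mul_apply, Module.End.mul_apply, ih ((g - 1) x)]
          congr 1
          simp only [LinearMap.sub_apply, Module.End.one_apply, AddSubgroupClass.coe_sub]
          rw [hgf x]
      have hnil' : ∀ g ∈ S', IsNilpotent (g - 1) := by
        rintro g ⟨f, hf, hgf⟩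
        obtain ⟨k, hk⟩ := hnil f hf
        refine ⟨k, LinearMap.ext fun x => ?_⟩
        have hx := hcoe g f hgf k x
        rw [hk] at hx
        simp only [LinearMap.zero_apply] at hx ⊢
        exact Subtype.ext (by simpa using hx)
      haveI : Nontrivial W := Submodule.nontrivial_iff_ne_bot.2 hWbot
      have hrW : finrank K W ≤ m := by
        have := Submodule.finrank_lt (K := K) (V := V) hWtop
        omega
      obtain ⟨v, hv0, hfix⟩ := IH W hrW inferInstance S' h1' hmul' hnil'
      refine ⟨(v : V), by simpa using hv0, ?_⟩
      intro f hf
      have hmem : f.restrict (hWinv f hf) ∈ S' := ⟨f, hf, fun x => rfl⟩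
      have := congrArg Subtype.val (hfix _ hmem)
      rw [LinearMap.restrict_apply] at this
      simpa using this
    · push_neg at hex
      have hirr : ∀ W : Submodule K V, (∀ f ∈ S, ∀ x ∈ W, f x ∈ W) → W = ⊥ ∨ W = ⊤ := by
        intro W hW
        by_contra hc
        push_neg at hc
        obtain ⟨f, hf, x, hx, hfx⟩ := hex W hc.1 hc.2
        exact hfx (hW f hf x hx)
      have hspan := burnside S h1 hmul hirr
      have htr : ∀ s ∈ S, LinearMap.trace K V s = (finrank K V : K) := by
        intro s hs
        have hdecomp : s = 1 + (s - 1) := by abel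
        rw [hdecomp, map_add, LinearMap.trace_one]
        have hnils := isNilpotent_trace_of_isNilpotent (hnil s hs)
        rw [hnils.eq_zero, add_zero]
      have hall1 : ∀ f ∈ S, f = 1 := by
        intro f hf
        have hτ : ∀ x : Module.End K V, LinearMap.trace K V ((f - 1) * x) = 0 := by
          have hS : ∀ x ∈ S, LinearMap.trace K V ((f - 1) * x) = 0 := by
            intro x hx
            rw [sub_mul, one_mul, map_sub, htr _ (hmul f hf x hx), htr x hx, sub_self]
          intro x
          have hx : x ∈ Submodule.span K S := by rw [hspan]; exact Submodule.mem_top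
          induction hx using Submodule.span_induction with
          | mem y hy => exact hS y hy
          | zero => simp
          | add y z _ _ hy hz => rw [mul_add, map_add, hy, hz, add_zero]
          | smul c y _ hy => rw [mul_smul_comm, map_smul, hy, smul_zero]
        have := trace_nondeg (f - 1) hτ
        rwa [sub_eq_zero] at this
      obtain ⟨v, hv⟩ := exists_ne (0 : V)
      exact ⟨v, hv, fun f hf => by rw [hall1 f hf]; rfl⟩

theorem main_alg {K : Type*} [Field K] [IsAlgClosed K] {p : ℕ} [hp : Fact p.Prime] [CharP K p] :
    ∀ (m : ℕ) (V : Type u) [AddCommGroup V] [Module K V] [FiniteDimensional K V],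
      finrank K V ≤ m → ∀ G : Subgroup (Module.End K V)ˣ, Group.FG G →
      (∀ g ∈ G, IsNilpotent ((g : Module.End K V) - 1)) → Finite G := by
  intro m
  induction m with
  | zero =>
    intro V _ _ _ hr G _ _
    have hsub : Subsingleton V := by
      rw [← Module.finrank_zero_iff (R := K)]
      omega
    haveI : Subsingleton (Module.End K V) := ⟨fun f g => LinearMap.ext fun x => Subsingleton.elim _ _⟩
    exact Finite.of_injective (fun g : G => (g : (Module.End K V)ˣ))
      fun a b _ => Subtype.ext (Units.ext (Subsingleton.elim _ _))
  | succ m IH =>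
    intro V _ _ _ hr G hFG hnil
    haveI := hFG
    by_cases hV : Subsingleton V
    · haveI : Subsingleton (Module.End K V) := ⟨fun f g => LinearMap.ext fun x => Subsingleton.elim _ _⟩
      exact Finite.of_injective (fun g : G => (g : (Module.End K V)ˣ))
        fun a b _ => Subtype.ext (Subsingleton.elim _ _)
    haveI hnt : Nontrivial V := not_subsingleton_iff_nontrivial.mp hV
    set W : Submodule K V := ⨅ g : G, LinearMap.ker (((g : (Module.End K V)ˣ) : Module.End K V) - 1) with hWdef
    have hWmem : ∀ x : V, x ∈ W ↔ ∀ g : G, ((g : (Module.End K V)ˣ) : Module.End K V) x = x := by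
      intro x
      rw [hWdef, Submodule.mem_iInf]
      constructor
      · intro h g
        have := h g
        rw [LinearMap.mem_ker, LinearMap.sub_apply, Module.End.one_apply, sub_eq_zero] at this
        exact this
      · intro h g
        rw [LinearMap.mem_ker, LinearMap.sub_apply, Module.End.one_apply, sub_eq_zero]
        exact h g
    by_cases hWtop : W = ⊤
    · -- every element is the identity
      haveI : Subsingleton G := by
        refine ⟨fun a b => ?_⟩
        have h1 : ∀ g : G, (g : (Module.End K V)ˣ) = 1 := by
          intro g
          refine Units.ext (LinearMap.ext fun x => ?_)
          have : x ∈ W := hWtop ▸ Submodule.mem_top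
          rw [hWmem] at this
          simpa using this g
        exact Subtype.ext (by rw [h1 a, h1 b])
      exact Finite.of_subsingleton
    · -- W is a nonzero proper fixed subspace
      set S : Set (Module.End K V) := (fun g : G => ((g : (Module.End K V)ˣ) : Module.End K V)) '' Set.univ with hSdef
      have hS1 : (1 : Module.End K V) ∈ S := ⟨1, Set.mem_univ _, rfl⟩
      have hSmul : ∀ f ∈ S, ∀ g ∈ S, f * g ∈ S := by
        rintro _ ⟨a, -, rfl⟩ _ ⟨b, -, rfl⟩
        exact ⟨a * b, Set.mem_univ _, by simp⟩
      have hSnil : ∀ f ∈ S, IsNilpotent (f - 1) := by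
        rintro _ ⟨a, -, rfl⟩
        exact hnil _ a.2
      obtain ⟨v, hv0, hvfix⟩ := kolchin_fixed (m + 1) V hr hnt S hS1 hSmul hSnil
      have hWbot : W ≠ ⊥ := by
        intro hbot
        have hvW : v ∈ W := by
          rw [hWmem]
          intro g
          exact hvfix _ ⟨g, Set.mem_univ _, rfl⟩
        rw [hbot, Submodule.mem_bot] at hvW
        exact hv0 hvW
      have hWfix : ∀ g : G, ∀ x ∈ W, ((g : (Module.End K V)ˣ) : Module.End K V) x = x := by
        intro g x hx
        rw [hWmem] at hx
        exact hx g
      -- quotient setup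
      have hQr : finrank K (V ⧸ W) ≤ m := by
        have h1 := Submodule.finrank_quotient_add_finrank W
        have h2 : 0 < finrank K W := by
          rw [finrank_pos_iff]
          exact Submodule.nontrivial_iff_ne_bot.2 hWbot
        omega
      have hle : ∀ g : G, W ≤ W.comap ((g : (Module.End K V)ˣ) : Module.End K V) := by
        intro g x hx
        rw [Submodule.mem_comap, hWfix g x hx]
        exact hx
      set φ : G →* Module.End K (V ⧸ W) :=
        { toFun := fun g => W.mapQ W ((g : (Module.End K V)ˣ) : Module.End K V) (hle g),
          map_one' := by
            refine Submodule.linearMap_qext _ (LinearMap.ext fun x => ?_)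
            simp [Submodule.mapQ_apply]
          map_mul' := by
            intro a b
            refine Submodule.linearMap_qext _ (LinearMap.ext fun x => ?_)
            simp [Submodule.mapQ_apply] } with hφdef
      have hφapply : ∀ (g : G) (x : V), φ g (W.mkQ x) = W.mkQ (((g : (Module.End K V)ˣ) : Module.End K V) x) := by
        intro g x
        rw [Submodule.mkQ_apply, Submodule.mkQ_apply]
        have hφg : φ g = W.mapQ W (((g : (Module.End K V)ˣ) : Module.End K V)) (hle g) := rfl
        rw [hφg]
        exact Submodule.mapQ_apply (p := W) (q := W)
          (((g : (Module.End K V)ˣ) : Module.End K V)) (h := hle g) x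
      set ρ : G →* (Module.End K (V ⧸ W))ˣ := φ.toHomUnits with hρdef
      -- the image is finite by induction
      haveI hFGrange : Group.FG ρ.range := Group.fg_of_surjective ρ.rangeRestrict_surjective
      have hnilrange : ∀ h ∈ ρ.range, IsNilpotent ((h : Module.End K (V ⧸ W)) - 1) := by
        rintro _ ⟨g, rfl⟩
        obtain ⟨k, hk⟩ := hnil _ g.2
        have hcomm : ∀ (j : ℕ) (x : V), ((φ g - 1) ^ j) (W.mkQ x)
            = W.mkQ (((((g : (Module.End K V)ˣ) : Module.End K V) - 1) ^ j) x) := by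
          intro j
          induction j with
          | zero => intro x; simp
          | succ j ih =>
            intro x
            rw [pow_succ, pow_succ, Module.End.mul_apply, Module.End.mul_apply]
            have hstep : (φ g - 1) (W.mkQ x)
                = W.mkQ ((((g : (Module.End K V)ˣ) : Module.End K V) - 1) x) := by
              simp only [LinearMap.sub_apply, Module.End.one_apply, map_sub]
              rw [hφapply]
            rw [hstep]
            exact ih _
        refine ⟨k, LinearMap.ext fun q => ?_⟩
        obtain ⟨x, rfl⟩ := W.mkQ_surjective q
        have hval : ((ρ g : (Module.End K (V ⧸ W))ˣ) : Module.End K (V ⧸ W)) = φ g := rfl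
        rw [LinearMap.zero_apply, hval, hcomm k x, hk]
        simp
      haveI hfin : Finite ρ.range := IH (V ⧸ W) hQr ρ.range hFGrange hnilrange
      -- the kernel has finite index, is f.g., commutative and of exponent p
      set N : Subgroup G := ρ.ker with hNdef
      haveI hfinquot : Finite (G ⧸ N) :=
        Finite.of_equiv ρ.range (QuotientGroup.quotientKerEquivRange ρ).symm.toEquiv
      haveI : N.FiniteIndex := Subgroup.finiteIndex_of_finite_quotient
      haveI hNFG : Group.FG N := inferInstance
      have hker1 : ∀ x : N, ∀ v : V,
          (((x : G) : (Module.End K V)ˣ) : Module.End K V) v - v ∈ W := by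
        intro x v
        have hx : φ (x : G) = 1 := by
          have hxker : ρ (x : G) = 1 := (MonoidHom.mem_ker).mp (hNdef ▸ x.2)
          exact congrArg Units.val hxker
        have h1 := congrArg (fun f : Module.End K (V ⧸ W) => f (W.mkQ v)) hx
        simp only [Module.End.one_apply] at h1
        rw [hφapply] at h1
        rwa [Submodule.mkQ_apply, Submodule.mkQ_apply, Submodule.Quotient.eq] at h1
      have hsq : ∀ x y : N, ((((x : G) : (Module.End K V)ˣ) : Module.End K V) - 1)
          * ((((y : G) : (Module.End K V)ˣ) : Module.End K V) - 1) = 0 := by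
        intro x y
        ext v
        simp only [Module.End.mul_apply, LinearMap.sub_apply, Module.End.one_apply,
          LinearMap.zero_apply]
        rw [hWfix (x : G) _ (hker1 y v), sub_self]
      have hcommN : ∀ x y : N, x * y = y * x := by
        intro x y
        set a : Module.End K V := (((x : G) : (Module.End K V)ˣ) : Module.End K V) with ha
        set b : Module.End K V := (((y : G) : (Module.End K V)ˣ) : Module.End K V) with hb
        have key : a * b - b * a = (a - 1) * (b - 1) - (b - 1) * (a - 1) := by noncomm_ring
        have h0 : a * b - b * a = 0 := by rw [key, hsq x y, hsq y x, sub_zero]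
        have hab : a * b = b * a := by rwa [sub_eq_zero] at h0
        refine Subtype.ext (Subtype.ext (Units.ext ?_))
        simpa only [Subgroup.coe_mul, Units.val_mul] using hab
      have htor : Monoid.IsTorsion N := by
        intro x
        rw [isOfFinOrder_iff_pow_eq_one]
        refine ⟨p, hp.out.pos, ?_⟩
        set a : Module.End K V := (((x : G) : (Module.End K V)ˣ) : Module.End K V) with ha
        have hu2 : (a - 1) * (a - 1) = 0 := hsq x x
        have hinj : Function.Injective (algebraMap K (Module.End K V)) := by
          intro c d hcd
          obtain ⟨v₀, hv₀⟩ := exists_ne (0 : V)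
          have h1 := congrArg (fun f : Module.End K V => f v₀) hcd
          simp only [Module.algebraMap_end_apply] at h1
          exact smul_left_injective K hv₀ h1
        haveI : CharP (Module.End K V) p := charP_of_injective_ringHom hinj p
        have h1a : (1 : Module.End K V) + (a - 1) = a := by abel
        have hpow2 : (a - 1) ^ p = 0 := by
          have hsq' : (a - 1) ^ 2 = 0 := by rw [sq]; exact hu2
          have hple : 2 + (p - 2) = p := by have := hp.out.two_le; omega
          calc (a - 1) ^ p = (a - 1) ^ 2 * (a - 1) ^ (p - 2) := by rw [← pow_add, hple]
          _ = 0 := by rw [hsq', zero_mul]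
        have hap : a ^ p = 1 := by
          calc a ^ p = ((1 : Module.End K V) + (a - 1)) ^ p := by rw [h1a]
          _ = (1 : Module.End K V) ^ p + (a - 1) ^ p :=
              add_pow_char_of_commute p (Commute.one_left _)
          _ = 1 := by rw [one_pow, hpow2, add_zero]
        have hunits : ((x : G) : (Module.End K V)ˣ) ^ p = 1 := by
          refine Units.ext ?_
          rw [Units.val_pow_eq_pow_val, Units.val_one]
          exact hap
        exact Subtype.ext (Subtype.ext (by
          simp only [SubmonoidClass.coe_pow, OneMemClass.coe_one]
          exact hunits))
      letI : CommGroup N := { (inferInstance : Group N) with mul_comm := hcommN }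
      haveI : Finite N := CommGroup.finite_of_fg_torsion N htor
      exact Finite.of_equiv _ (Subgroup.groupEquivQuotientProdSubgroup (s := N)).symm

end UnipotentFG

open scoped MatrixGroups

open Module in
/-- A finitely generated group of matrices over a field of
characteristic `p > 0`, all of whose elements are unipotent, is finite. -/
theorem finitelyGenerated_unipotent_group_is_finite
    {p : ℕ} [Fact p.Prime] {F : Type*} [Field F] [CharP F p] {n : ℕ}
    (G : Subgroup (GL (Fin n) F)) [Group.FG G]
    (hu : ∀ g ∈ G, ((g : Matrix (Fin n) (Fin n) F) - 1) ^ n = 0) :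
    Finite G := by
  classical
  set K := AlgebraicClosure F with hK
  haveI : CharP K p := charP_of_injective_algebraMap (algebraMap F K).injective p
  set α : Matrix (Fin n) (Fin n) K ≃ₐ[K] Module.End K (Fin n → K) :=
    LinearMap.toMatrixAlgEquiv'.symm with hα
  set β : Matrix (Fin n) (Fin n) F →+* Matrix (Fin n) (Fin n) K :=
    RingHom.mapMatrix (algebraMap F K) with hβ
  set Φ : GL (Fin n) F →* (Module.End K (Fin n → K))ˣ :=
    (Units.mapEquiv (α.toRingEquiv.toMulEquiv)).toMonoidHom.comp (Units.map β.toMonoidHom)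
    with hΦ
  have hβinj : Function.Injective β := by
    intro M N hMN
    ext i j
    have := congrArg (fun P : Matrix (Fin n) (Fin n) K => P i j) hMN
    simp only [hβ, RingHom.mapMatrix_apply, Matrix.map_apply] at this
    exact (algebraMap F K).injective this
  have hinj1 : Function.Injective (Units.map β.toMonoidHom) := by
    intro g h hgh
    apply Units.ext
    have := congrArg Units.val hgh
    simp only [Units.coe_map, RingHom.toMonoidHom_eq_coe, MonoidHom.coe_coe] at this
    exact hβinj this
  have hΦinj : Function.Injective Φ :=
    (MulEquiv.injective (Units.mapEquiv (α.toRingEquiv.toMulEquiv))).comp hinj1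
  have hval : ∀ g : GL (Fin n) F,
      ((Φ g : (Module.End K (Fin n → K))ˣ) : Module.End K (Fin n → K))
        = α (β (g : Matrix (Fin n) (Fin n) F)) := by
    intro g
    simp only [hΦ, MonoidHom.comp_apply, MulEquiv.coe_toMonoidHom, Units.coe_mapEquiv,
      Units.coe_map, RingHom.toMonoidHom_eq_coe, MonoidHom.coe_coe]
    rfl
  have hnil : ∀ g' ∈ G.map Φ, IsNilpotent ((g' : Module.End K (Fin n → K)) - 1) := by
    intro g' hg'
    rcases Subgroup.mem_map.1 hg' with ⟨g, hg, rfl⟩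
    refine ⟨n, ?_⟩
    rw [hval g]
    calc (α (β (g : Matrix (Fin n) (Fin n) F)) - 1) ^ n
        = α (β ((((g : Matrix (Fin n) (Fin n) F)) - 1) ^ n)) := by
          rw [map_pow, map_pow, map_sub, map_one, map_sub, map_one]
      _ = 0 := by rw [hu g hg, map_zero, map_zero]
  haveI hFGmap : Group.FG (G.map Φ) :=
    Group.fg_of_surjective (f := (G.equivMapOfInjective Φ hΦinj).toMonoidHom)
      (G.equivMapOfInjective Φ hΦinj).surjective
  haveI hfin : Finite (G.map Φ) :=
    UnipotentFG.main_alg (p := p) (finrank K (Fin n → K)) (Fin n → K) le_rfl (G.map Φ) hFGmap hnil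
  exact Finite.of_equiv _ (G.equivMapOfInjective Φ hΦinj).symm.toEquiv
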